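/- Let N ≥ 2, let a^k, b^k ∈ ℝ^{2N} for k = 1,...,N−1, and define the vacuum potential Θ₀ of the variables (q¹,...,q^{N−1}, p¹,...,p^{N−1}, x¹,...,x^{2N}, y¹,...,y^{2N}) by Θ₀ := (1/2)Σ_{k=1}^{N−1}Σ_{i,j=1}^{2N}(a^k_i b^k_j − a^k_j b^k_i)x^i y^j + Σ_{k=1}^{N−1}Σ_{i=1}^{2N}(a^k_i p^k x^i − b^k_i q^k x^i). Then Θ₀ satisfies the 2+2N-dimensional heavenly equation Θ_{x^i y^j} − Θ_{x^j y^i} = {Θ_{x^i}, Θ_{x^j}}_{(q,p)} for every pair 1 ≤ i < j ≤ 2N, where {f,g}_{(q,p)} := Σ_{k=1}^{N−1}(f_{q^k}g_{p^k} − f_{p^k}g_{q^k}), and consequently ω_{ij} := (Θ₀)_{x^i y^j} − (Θ₀)_{x^j y^i} satisfies the 2N+2N-dimensional TED equation Σ_{σ∈S_{2N}} sgn(σ) ∏_{k=1}^{N} ω_{σ(2k−1),σ(2k)} = 0. -/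

import Mathlib

noncomputable section

/-- The space of the variables `(q¹,…,q^{N−1}, p¹,…,p^{N−1}, x¹,…,x^{2N}, y¹,…,y^{2N})`. -/
abbrev DN (N : ℕ) : Type :=
  (Fin (N - 1) → ℝ) × (Fin (N - 1) → ℝ) × (Fin (2 * N) → ℝ) × (Fin (2 * N) → ℝ)

/-- Directional (partial) derivative of `f` in the direction `v`. -/
def pdv {E : Type*} [NormedAddCommGroup E] [NormedSpace ℝ E]
    (v : E) (f : E → ℝ) (z : E) : ℝ := fderiv ℝ f z v

/-- Direction of the coordinate `q^k`. -/
def dq (N : ℕ) (k : Fin (N - 1)) : DN N := (Pi.single k 1, 0, 0, 0)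
/-- Direction of the coordinate `p^k`. -/
def dp (N : ℕ) (k : Fin (N - 1)) : DN N := (0, Pi.single k 1, 0, 0)
/-- Direction of the coordinate `x^i`. -/
def dx (N : ℕ) (i : Fin (2 * N)) : DN N := (0, 0, Pi.single i 1, 0)
/-- Direction of the coordinate `y^i`. -/
def dy (N : ℕ) (i : Fin (2 * N)) : DN N := (0, 0, 0, Pi.single i 1)

/-- `ω_{ij} = Θ_{x^i y^j} − Θ_{x^j y^i}`. -/
def ωc (N : ℕ) (Θ : DN N → ℝ) (i j : Fin (2 * N)) (z : DN N) : ℝ :=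
  pdv (dx N i) (pdv (dy N j) Θ) z - pdv (dx N j) (pdv (dy N i) Θ) z

/-- The Pfaffian-type sum `Σ_{σ ∈ S_{2N}} sgn(σ) Π_{k=1}^{N} ω_{σ(2k−1) σ(2k)}`
(written with `0`-based indices: the `k`-th factor pairs `σ(2k)` with `σ(2k+1)`). -/
def pfSum (N : ℕ) (ω : Fin (2 * N) → Fin (2 * N) → ℝ) : ℝ :=
  ∑ σ : Equiv.Perm (Fin (2 * N)), ((Equiv.Perm.sign σ : ℤ) : ℝ) *
    ∏ k : Fin N, ω (σ ⟨2 * k.1, by have := k.2; omega⟩) (σ ⟨2 * k.1 + 1, by have := k.2; omega⟩)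

namespace Stmt17Aux

open Finset

/-! ### Coordinate continuous linear maps -/

def cq (N : ℕ) (k : Fin (N - 1)) : DN N →L[ℝ] ℝ :=
  (ContinuousLinearMap.proj k).comp
    (ContinuousLinearMap.fst ℝ (Fin (N-1) → ℝ) ((Fin (N-1) → ℝ) × (Fin (2*N) → ℝ) × (Fin (2*N) → ℝ)))

def cp (N : ℕ) (k : Fin (N - 1)) : DN N →L[ℝ] ℝ :=
  (ContinuousLinearMap.proj k).comp
    ((ContinuousLinearMap.fst ℝ (Fin (N-1) → ℝ) ((Fin (2*N) → ℝ) × (Fin (2*N) → ℝ))).comp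
      (ContinuousLinearMap.snd ℝ (Fin (N-1) → ℝ) ((Fin (N-1) → ℝ) × (Fin (2*N) → ℝ) × (Fin (2*N) → ℝ))))

def cx (N : ℕ) (i : Fin (2 * N)) : DN N →L[ℝ] ℝ :=
  (ContinuousLinearMap.proj i).comp
    ((ContinuousLinearMap.fst ℝ (Fin (2*N) → ℝ) (Fin (2*N) → ℝ)).comp
      ((ContinuousLinearMap.snd ℝ (Fin (N-1) → ℝ) ((Fin (2*N) → ℝ) × (Fin (2*N) → ℝ))).comp
        (ContinuousLinearMap.snd ℝ (Fin (N-1) → ℝ) ((Fin (N-1) → ℝ) × (Fin (2*N) → ℝ) × (Fin (2*N) → ℝ)))))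

def cy (N : ℕ) (i : Fin (2 * N)) : DN N →L[ℝ] ℝ :=
  (ContinuousLinearMap.proj i).comp
    ((ContinuousLinearMap.snd ℝ (Fin (2*N) → ℝ) (Fin (2*N) → ℝ)).comp
      ((ContinuousLinearMap.snd ℝ (Fin (N-1) → ℝ) ((Fin (2*N) → ℝ) × (Fin (2*N) → ℝ))).comp
        (ContinuousLinearMap.snd ℝ (Fin (N-1) → ℝ) ((Fin (N-1) → ℝ) × (Fin (2*N) → ℝ) × (Fin (2*N) → ℝ)))))

@[simp] lemma cq_apply (N : ℕ) (k : Fin (N-1)) (z : DN N) : cq N k z = z.1 k := rfl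
@[simp] lemma cp_apply (N : ℕ) (k : Fin (N-1)) (z : DN N) : cp N k z = z.2.1 k := rfl
@[simp] lemma cx_apply (N : ℕ) (i : Fin (2*N)) (z : DN N) : cx N i z = z.2.2.1 i := rfl
@[simp] lemma cy_apply (N : ℕ) (i : Fin (2*N)) (z : DN N) : cy N i z = z.2.2.2 i := rfl

/-! ### The vacuum potential and its derivatives -/

def F (N : ℕ) (a b : Fin (N - 1) → Fin (2 * N) → ℝ) : DN N → ℝ := fun z =>
  (1 / 2) * ∑ k : Fin (N - 1), ∑ i : Fin (2 * N), ∑ j : Fin (2 * N),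
      (a k i * b k j - a k j * b k i) * z.2.2.1 i * z.2.2.2 j
    + ∑ k : Fin (N - 1), ∑ i : Fin (2 * N), (a k i * z.2.1 k * z.2.2.1 i - b k i * z.1 k * z.2.2.1 i)

lemma fderiv_F_apply (N : ℕ) (a b : Fin (N - 1) → Fin (2 * N) → ℝ) (z v : DN N) :
    fderiv ℝ (F N a b) z v =
      (1 / 2) * (∑ k : Fin (N - 1), ∑ i : Fin (2 * N), ∑ j : Fin (2 * N),
          (a k i * b k j - a k j * b k i) * (v.2.2.1 i * z.2.2.2 j + z.2.2.1 i * v.2.2.2 j))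
        + ∑ k : Fin (N - 1), ∑ i : Fin (2 * N),
            (a k i * (v.2.1 k * z.2.2.1 i + z.2.1 k * v.2.2.1 i)
              - b k i * (v.1 k * z.2.2.1 i + z.1 k * v.2.2.1 i)) := by
  have h1 : HasFDerivAt
      (fun z : DN N => ∑ k : Fin (N - 1), ∑ i : Fin (2 * N), ∑ j : Fin (2 * N),
          (a k i * b k j - a k j * b k i) * z.2.2.1 i * z.2.2.2 j)
      (∑ k : Fin (N - 1), ∑ i : Fin (2 * N), ∑ j : Fin (2 * N),
        (((a k i * b k j - a k j * b k i) * z.2.2.1 i) • cy N j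
          + z.2.2.2 j • ((a k i * b k j - a k j * b k i) • cx N i))) z := by
    apply HasFDerivAt.fun_sum; intro k _
    apply HasFDerivAt.fun_sum; intro i _
    apply HasFDerivAt.fun_sum; intro j _
    exact ((cx N i).hasFDerivAt.const_mul (a k i * b k j - a k j * b k i)).mul
      (cy N j).hasFDerivAt
  have h2 : HasFDerivAt
      (fun z : DN N => ∑ k : Fin (N - 1), ∑ i : Fin (2 * N),
          (a k i * z.2.1 k * z.2.2.1 i - b k i * z.1 k * z.2.2.1 i))
      (∑ k : Fin (N - 1), ∑ i : Fin (2 * N),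
        (((a k i * z.2.1 k) • cx N i + z.2.2.1 i • (a k i • cp N k))
          - ((b k i * z.1 k) • cx N i + z.2.2.1 i • (b k i • cq N k)))) z := by
    apply HasFDerivAt.fun_sum; intro k _
    apply HasFDerivAt.fun_sum; intro i _
    exact (((cp N k).hasFDerivAt.const_mul (a k i)).mul (cx N i).hasFDerivAt).sub
      (((cq N k).hasFDerivAt.const_mul (b k i)).mul (cx N i).hasFDerivAt)
  have h : HasFDerivAt (F N a b) _ z := (h1.const_mul ((1:ℝ)/2)).add h2
  rw [h.fderiv]
  simp only [ContinuousLinearMap.add_apply, ContinuousLinearMap.smul_apply,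
    ContinuousLinearMap.coe_sum', Finset.sum_apply, ContinuousLinearMap.sub_apply,
    cq_apply, cp_apply, cx_apply, cy_apply, smul_eq_mul]
  congr 1
  · congr 1
    refine Finset.sum_congr rfl fun k _ => Finset.sum_congr rfl fun i _ =>
      Finset.sum_congr rfl fun j _ => ?_
    ring
  · refine Finset.sum_congr rfl fun k _ => Finset.sum_congr rfl fun i _ => ?_
    ring

lemma fderiv_F2 (N : ℕ) (a b : Fin (N - 1) → Fin (2 * N) → ℝ) (w z v : DN N) :
    fderiv ℝ (fun z => fderiv ℝ (F N a b) z w) z v =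
      (1 / 2) * (∑ k : Fin (N - 1), ∑ i : Fin (2 * N), ∑ j : Fin (2 * N),
          (a k i * b k j - a k j * b k i) * (w.2.2.1 i * v.2.2.2 j + v.2.2.1 i * w.2.2.2 j))
        + ∑ k : Fin (N - 1), ∑ i : Fin (2 * N),
            (a k i * (w.2.1 k * v.2.2.1 i + v.2.1 k * w.2.2.1 i)
              - b k i * (w.1 k * v.2.2.1 i + v.1 k * w.2.2.1 i)) := by
  have hfun : (fun z : DN N => fderiv ℝ (F N a b) z w) = (fun z : DN N =>
      (1 / 2) * (∑ k : Fin (N - 1), ∑ i : Fin (2 * N), ∑ j : Fin (2 * N),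
          (a k i * b k j - a k j * b k i) * (w.2.2.1 i * z.2.2.2 j + z.2.2.1 i * w.2.2.2 j))
        + ∑ k : Fin (N - 1), ∑ i : Fin (2 * N),
            (a k i * (w.2.1 k * z.2.2.1 i + z.2.1 k * w.2.2.1 i)
              - b k i * (w.1 k * z.2.2.1 i + z.1 k * w.2.2.1 i))) :=
    funext fun z => fderiv_F_apply N a b z w
  rw [hfun]
  have h1 : HasFDerivAt
      (fun z : DN N => ∑ k : Fin (N - 1), ∑ i : Fin (2 * N), ∑ j : Fin (2 * N),
          (a k i * b k j - a k j * b k i) * (w.2.2.1 i * z.2.2.2 j + z.2.2.1 i * w.2.2.2 j))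
      (∑ k : Fin (N - 1), ∑ i : Fin (2 * N), ∑ j : Fin (2 * N),
        (a k i * b k j - a k j * b k i) • (w.2.2.1 i • cy N j + w.2.2.2 j • cx N i)) z := by
    apply HasFDerivAt.fun_sum; intro k _
    apply HasFDerivAt.fun_sum; intro i _
    apply HasFDerivAt.fun_sum; intro j _
    exact (((cy N j).hasFDerivAt.const_mul (w.2.2.1 i)).add
      ((cx N i).hasFDerivAt.mul_const (w.2.2.2 j))).const_mul _
  have h2 : HasFDerivAt
      (fun z : DN N => ∑ k : Fin (N - 1), ∑ i : Fin (2 * N),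
          (a k i * (w.2.1 k * z.2.2.1 i + z.2.1 k * w.2.2.1 i)
            - b k i * (w.1 k * z.2.2.1 i + z.1 k * w.2.2.1 i)))
      (∑ k : Fin (N - 1), ∑ i : Fin (2 * N),
        (a k i • (w.2.1 k • cx N i + w.2.2.1 i • cp N k)
          - b k i • (w.1 k • cx N i + w.2.2.1 i • cq N k))) z := by
    apply HasFDerivAt.fun_sum; intro k _
    apply HasFDerivAt.fun_sum; intro i _
    exact ((((cx N i).hasFDerivAt.const_mul (w.2.1 k)).add
        ((cp N k).hasFDerivAt.mul_const (w.2.2.1 i))).const_mul (a k i)).sub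
      ((((cx N i).hasFDerivAt.const_mul (w.1 k)).add
        ((cq N k).hasFDerivAt.mul_const (w.2.2.1 i))).const_mul (b k i))
  have h := (h1.const_mul ((1:ℝ)/2)).fun_add h2
  rw [h.fderiv]
  simp only [ContinuousLinearMap.add_apply, ContinuousLinearMap.smul_apply,
    ContinuousLinearMap.coe_sum', Finset.sum_apply, ContinuousLinearMap.sub_apply,
    cq_apply, cp_apply, cx_apply, cy_apply, smul_eq_mul]
  congr 1
  · congr 1
    refine Finset.sum_congr rfl fun k _ => Finset.sum_congr rfl fun i _ =>
      Finset.sum_congr rfl fun j _ => ?_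
    ring
  · refine Finset.sum_congr rfl fun k _ => Finset.sum_congr rfl fun i _ => ?_
    ring

/-! ### Pairing products over `Fin (2*N)` -/

lemma prod_pairs (N : ℕ) (f : Fin (2 * N) → ℝ) :
    ∏ t, f t = ∏ m : Fin N,
      (f ⟨2 * m.1, by have := m.2; omega⟩ * f ⟨2 * m.1 + 1, by have := m.2; omega⟩) := by
  let e : Fin N × Fin 2 ≃ Fin (2 * N) := finProdFinEquiv.trans (finCongr (by ring))
  rw [← Equiv.prod_comp e f, Fintype.prod_prod_type]
  refine Finset.prod_congr rfl fun m _ => ?_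
  rw [Fin.prod_univ_two]
  congr 1 <;> · apply congrArg; apply Fin.ext
                simp [e, finProdFinEquiv]
                all_goals omega

/-! ### Vanishing of the Pfaffian sum for low-rank skew forms -/

lemma pf_zero (N : ℕ) (hN : 2 ≤ N) (a b : Fin (N - 1) → Fin (2 * N) → ℝ) :
    pfSum N (fun i j => ∑ k : Fin (N - 1), (a k i * b k j - a k j * b k i)) = 0 := by
  classical
  set r : (Fin (N-1) ⊕ Fin (N-1)) → Fin (2*N) → ℝ := Sum.elim a (fun k i => -(b k i)) with hr
  set s : (Fin (N-1) ⊕ Fin (N-1)) → Fin (2*N) → ℝ := Sum.elim b a with hs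
  have hsplit : ∀ i j : Fin (2*N),
      (∑ k : Fin (N - 1), (a k i * b k j - a k j * b k i))
        = ∑ t : Fin (N-1) ⊕ Fin (N-1), r t i * s t j := by
    intro i j
    rw [Fintype.sum_sum_type]
    simp only [hr, hs, Sum.elim_inl, Sum.elim_inr]
    rw [← Finset.sum_add_distrib]
    exact Finset.sum_congr rfl fun k _ => by ring
  unfold pfSum
  simp only [hsplit]
  have hprod : ∀ σ : Equiv.Perm (Fin (2 * N)),
      (∏ m : Fin N, ∑ t : Fin (N-1) ⊕ Fin (N-1),
          r t (σ ⟨2 * m.1, by have := m.2; omega⟩) * s t (σ ⟨2 * m.1 + 1, by have := m.2; omega⟩))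
        = ∑ c : Fin N → (Fin (N-1) ⊕ Fin (N-1)), ∏ m : Fin N,
            r (c m) (σ ⟨2 * m.1, by have := m.2; omega⟩)
              * s (c m) (σ ⟨2 * m.1 + 1, by have := m.2; omega⟩) :=
    fun σ => Fintype.prod_sum _
  calc (∑ σ : Equiv.Perm (Fin (2 * N)), ((Equiv.Perm.sign σ : ℤ) : ℝ) *
        ∏ m : Fin N, ∑ t : Fin (N-1) ⊕ Fin (N-1),
          r t (σ ⟨2 * m.1, by have := m.2; omega⟩) * s t (σ ⟨2 * m.1 + 1, by have := m.2; omega⟩))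
      = ∑ c : Fin N → (Fin (N-1) ⊕ Fin (N-1)), ∑ σ : Equiv.Perm (Fin (2 * N)),
          ((Equiv.Perm.sign σ : ℤ) : ℝ) * ∏ m : Fin N,
            r (c m) (σ ⟨2 * m.1, by have := m.2; omega⟩)
              * s (c m) (σ ⟨2 * m.1 + 1, by have := m.2; omega⟩) := by
        rw [Finset.sum_comm]
        refine Finset.sum_congr rfl fun σ _ => ?_
        rw [hprod σ, Finset.mul_sum]
    _ = 0 := by
        refine Finset.sum_eq_zero fun c _ => ?_
        set M : Matrix (Fin (2*N)) (Fin (2*N)) ℝ := Matrix.of fun t j =>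
          if t.1 % 2 = 0 then r (c ⟨t.1 / 2, by have := t.2; omega⟩) j
          else s (c ⟨t.1 / 2, by have := t.2; omega⟩) j with hM
        have hM0 : ∀ m : Fin N, M ⟨2 * m.1, by have := m.2; omega⟩ = r (c m) := by
          intro m
          funext j
          have hix : (⟨2 * m.1 / 2, by have := m.2; omega⟩ : Fin N) = m := Fin.ext (show 2 * m.1 / 2 = m.1 by omega)
          show (if 2 * m.1 % 2 = 0 then r (c ⟨2 * m.1 / 2, by have := m.2; omega⟩) j
              else s (c ⟨2 * m.1 / 2, by have := m.2; omega⟩) j) = r (c m) j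
          rw [if_pos (by omega), hix]
        have hM1 : ∀ m : Fin N, M ⟨2 * m.1 + 1, by have := m.2; omega⟩ = s (c m) := by
          intro m
          funext j
          have hix : (⟨(2 * m.1 + 1) / 2, by have := m.2; omega⟩ : Fin N) = m := Fin.ext (show (2 * m.1 + 1) / 2 = m.1 by omega)
          show (if (2 * m.1 + 1) % 2 = 0 then r (c ⟨(2 * m.1 + 1) / 2, by have := m.2; omega⟩) j
              else s (c ⟨(2 * m.1 + 1) / 2, by have := m.2; omega⟩) j) = s (c m) j
          rw [if_neg (by omega), hix]
        have hdet : M.transpose.det = ∑ σ : Equiv.Perm (Fin (2 * N)),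
            ((Equiv.Perm.sign σ : ℤ) : ℝ) * ∏ m : Fin N,
              r (c m) (σ ⟨2 * m.1, by have := m.2; omega⟩)
                * s (c m) (σ ⟨2 * m.1 + 1, by have := m.2; omega⟩) := by
          rw [Matrix.det_apply']
          refine Finset.sum_congr rfl fun σ _ => ?_
          congr 1
          rw [prod_pairs N (fun t => M.transpose (σ t) t)]
          refine Finset.prod_congr rfl fun m _ => ?_
          rw [Matrix.transpose_apply, Matrix.transpose_apply, hM0 m, hM1 m]
        have hMdet : M.det = 0 := by
          obtain ⟨m, m', hne, heq⟩ := Fintype.exists_ne_map_eq_of_card_lt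
            (fun m : Fin N => Sum.elim id id (c m)) (by simp; omega)
          have hval : m.1 ≠ m'.1 := fun h => hne (Fin.ext h)
          rcases h1 : c m with k | k <;> rcases h2 : c m' with k' | k'
          all_goals rw [h1, h2] at heq; simp only [Sum.elim_inl, Sum.elim_inr, id] at heq
          · exact Matrix.det_zero_of_row_eq
              (show (⟨2 * m.1, by have := m.2; omega⟩ : Fin (2*N)) ≠ ⟨2 * m'.1, by have := m'.2; omega⟩
                from fun h => by simp only [Fin.mk.injEq] at h; omega)
              (by rw [hM0 m, hM0 m', h1, h2, heq])
          · exact Matrix.det_zero_of_row_eq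
              (show (⟨2 * m.1, by have := m.2; omega⟩ : Fin (2*N)) ≠ ⟨2 * m'.1 + 1, by have := m'.2; omega⟩
                from fun h => by simp only [Fin.mk.injEq] at h; omega)
              (by rw [hM0 m, hM1 m', h1, h2, hr, hs]; simp [heq])
          · exact Matrix.det_zero_of_row_eq
              (show (⟨2 * m.1 + 1, by have := m.2; omega⟩ : Fin (2*N)) ≠ ⟨2 * m'.1, by have := m'.2; omega⟩
                from fun h => by simp only [Fin.mk.injEq] at h; omega)
              (by rw [hM1 m, hM0 m', h1, h2, hr, hs]; simp [heq])
          · exact Matrix.det_zero_of_row_eq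
              (show (⟨2 * m.1 + 1, by have := m.2; omega⟩ : Fin (2*N)) ≠ ⟨2 * m'.1 + 1, by have := m'.2; omega⟩
                from fun h => by simp only [Fin.mk.injEq] at h; omega)
              (by rw [hM1 m, hM1 m', h1, h2, hs]; simp [heq])
        rw [← hdet, Matrix.det_transpose, hMdet]

end Stmt17Aux


/-- the vacuum potential
`Θ₀ = ½ Σ_k Σ_{i,j}(a^k_i b^k_j − a^k_j b^k_i)x^i y^j + Σ_k Σ_i (a^k_i p^k x^i − b^k_i q^k x^i)`
satisfies the `2+2N`-dimensional heavenly equation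
`Θ_{x^i y^j} − Θ_{x^j y^i} = {Θ_{x^i}, Θ_{x^j}}_{(q,p)}` for every `1 ≤ i < j ≤ 2N`, and
consequently `ω_{ij} = (Θ₀)_{x^i y^j} − (Θ₀)_{x^j y^i}` satisfies the `2N+2N`-dimensional
TED equation `Σ_{σ ∈ S_{2N}} sgn(σ) Π_{k=1}^{N} ω_{σ(2k−1) σ(2k)} = 0`. -/
theorem stmt17 (N : ℕ) (hN : 2 ≤ N)
    (a b : Fin (N - 1) → Fin (2 * N) → ℝ) (Θ : DN N → ℝ)
    (hΘ : ∀ q p : Fin (N - 1) → ℝ, ∀ x y : Fin (2 * N) → ℝ, Θ (q, p, x, y) =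
      (1 / 2) * ∑ k : Fin (N - 1), ∑ i : Fin (2 * N), ∑ j : Fin (2 * N),
          (a k i * b k j - a k j * b k i) * x i * y j
        + ∑ k : Fin (N - 1), ∑ i : Fin (2 * N), (a k i * p k * x i - b k i * q k * x i)) :
    (∀ i j : Fin (2 * N), i < j → ∀ z : DN N,
      ωc N Θ i j z =
        ∑ k : Fin (N - 1),
          (pdv (dq N k) (pdv (dx N i) Θ) z * pdv (dp N k) (pdv (dx N j) Θ) z
            - pdv (dp N k) (pdv (dx N i) Θ) z * pdv (dq N k) (pdv (dx N j) Θ) z)) ∧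
    (∀ z : DN N, pfSum N (fun i j => ωc N Θ i j z) = 0) := by
  classical
  have hTF : Θ = Stmt17Aux.F N a b := by
    funext z
    obtain ⟨q, p, x, y⟩ := z
    exact hΘ q p x y
  have key : ∀ w v z : DN N, pdv v (pdv w Θ) z =
      (1 / 2) * (∑ k : Fin (N - 1), ∑ i : Fin (2 * N), ∑ j : Fin (2 * N),
          (a k i * b k j - a k j * b k i) * (w.2.2.1 i * v.2.2.2 j + v.2.2.1 i * w.2.2.2 j))
        + ∑ k : Fin (N - 1), ∑ i : Fin (2 * N),
            (a k i * (w.2.1 k * v.2.2.1 i + v.2.1 k * w.2.2.1 i)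
              - b k i * (w.1 k * v.2.2.1 i + v.1 k * w.2.2.1 i)) := by
    intro w v z
    rw [hTF]
    exact Stmt17Aux.fderiv_F2 N a b w z v
  have hxy : ∀ (i j : Fin (2 * N)) (z : DN N), pdv (dx N i) (pdv (dy N j) Θ) z
      = (1 / 2) * ∑ k : Fin (N - 1), (a k i * b k j - a k j * b k i) := by
    intro i j z
    rw [key (dy N j) (dx N i) z]
    simp [dx, dy, Pi.single_apply, Finset.sum_ite_eq', mul_ite, ite_mul]
  have hqx : ∀ (k' : Fin (N - 1)) (i : Fin (2 * N)) (z : DN N),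
      pdv (dq N k') (pdv (dx N i) Θ) z = -(b k' i) := by
    intro k' i z
    rw [key (dx N i) (dq N k') z]
    simp [dx, dq, Pi.single_apply, Finset.sum_ite_eq', mul_ite, ite_mul]
  have hpx : ∀ (k' : Fin (N - 1)) (i : Fin (2 * N)) (z : DN N),
      pdv (dp N k') (pdv (dx N i) Θ) z = a k' i := by
    intro k' i z
    rw [key (dx N i) (dp N k') z]
    simp [dx, dp, Pi.single_apply, Finset.sum_ite_eq', mul_ite, ite_mul]
  constructor
  · intro i j hij z
    show pdv (dx N i) (pdv (dy N j) Θ) z - pdv (dx N j) (pdv (dy N i) Θ) z = _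
    rw [hxy i j z, hxy j i z]
    simp only [hqx, hpx]
    rw [Finset.mul_sum, Finset.mul_sum, ← Finset.sum_sub_distrib]
    exact Finset.sum_congr rfl fun k _ => by ring
  · intro z
    have hfun : (fun i j => ωc N Θ i j z)
        = fun i j => ∑ k : Fin (N - 1), (a k i * b k j - a k j * b k i) := by
      funext i j
      show pdv (dx N i) (pdv (dy N j) Θ) z - pdv (dx N j) (pdv (dy N i) Θ) z = _
      rw [hxy i j z, hxy j i z, Finset.mul_sum, Finset.mul_sum, ← Finset.sum_sub_distrib]
      exact Finset.sum_congr rfl fun k _ => by ring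
    rw [hfun]
    exact Stmt17Aux.pf_zero N hN a b

end
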